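/- Let Y_0 = 1, Y_1, ..., Y_n be a nonnegative martingale with respect to X_0, ..., X_n. Define R_i = Y_i/Y_{i-1} − 1 (set R_i = 0 when Y_{i-1} = Y_i = 0). Then for every λ ∈ (0, 1/4], Pr[∃ i ∈ [n] such that |Y_i − 1| ≥ λ] ≤ 23 · E[Σ_{i=1}^n min{|R_i|, R_i²}] / λ². -/

import Mathlib

set_option maxHeartbeats 2000000


open MeasureTheory Finset

noncomputable def hub (l t : ℝ) : ℝ := if |t| ≤ l then t^2 else 2*l*|t| - l^2
noncomputable def hub' (l t : ℝ) : ℝ := 2 * max (min t l) (-l)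

lemma hub_nonneg {l t : ℝ} (hl : 0 < l) : 0 ≤ hub l t := by
  unfold hub; split_ifs with h
  · positivity
  · push_neg at h; nlinarith [abs_nonneg t]

lemma hub_zero {l : ℝ} (hl : 0 < l) : hub l 0 = 0 := by
  simp [hub, abs_of_nonneg, hl.le]

lemma hub_ge {l t : ℝ} (hl : 0 < l) (h : l ≤ |t|) : l^2 ≤ hub l t := by
  unfold hub; split_ifs with h'
  · have : |t| = l := le_antisymm h' h
    nlinarith [sq_abs t]
  · nlinarith

lemma hub_le {l t : ℝ} (hl : 0 < l) : hub l t ≤ 2*l*|t| := by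
  unfold hub; split_ifs with h
  · nlinarith [abs_nonneg t, sq_abs t]
  · nlinarith

lemma hub'_eq_of_abs_le {l a : ℝ} (h : |a| ≤ l) : hub' l a = 2*a := by
  rw [abs_le] at h
  unfold hub'
  rw [min_eq_left h.2, max_eq_left h.1]

lemma hub'_eq_pos {l a : ℝ} (hl : 0 < l) (h : l < a) : hub' l a = 2*l := by
  unfold hub'
  rw [min_eq_right h.le, max_eq_left (by linarith)]

lemma hub'_eq_neg {l a : ℝ} (hl : 0 < l) (h : a < -l) : hub' l a = -(2*l) := by
  unfold hub'
  rw [min_eq_left (by linarith), max_eq_right h.le]; ring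

lemma hub'_abs_le {l t : ℝ} (hl : 0 < l) : |hub' l t| ≤ 2*l := by
  unfold hub'
  rw [abs_le]
  constructor
  · have := le_max_right (min t l) (-l); nlinarith
  · have := max_le (min_le_right t l) (by linarith : -l ≤ l); nlinarith

lemma hub_taylor {l a d : ℝ} (hl : 0 < l) :
    hub l (a + d) ≤ hub l a + hub' l a * d + d^2 := by
  have h1 : |a + d| ≤ |a| + |d| := abs_add_le a d
  have h2 : |a| ≤ |a + d| + |d| := by
    calc |a| = |a + d + (-d)| := by ring_nf
    _ ≤ |a + d| + |(-d)| := abs_add_le _ _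
    _ = |a + d| + |d| := by rw [abs_neg]
  have hsa := sq_abs a
  have hsad := sq_abs (a + d)
  have hsd := sq_abs d
  have hd := abs_nonneg d
  have hcase := abs_cases (a + d)
  unfold hub
  split_ifs with hA hB hB
  · rw [hub'_eq_of_abs_le hB]; nlinarith
  · push_neg at hB
    rcases lt_or_ge l a with hpos | hneg
    · rw [hub'_eq_pos hl hpos]
      have : |a| = a := abs_of_pos (by linarith)
      rcases hcase with ⟨he, _⟩ | ⟨he, _⟩ <;> nlinarith
    · have hneg' : a < -l := by
        rcases abs_cases a with ⟨he, _⟩ | ⟨he, _⟩ <;> [linarith; linarith]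
      rw [hub'_eq_neg hl hneg']
      have : |a| = -a := abs_of_neg (by linarith)
      rcases hcase with ⟨he, _⟩ | ⟨he, _⟩ <;> nlinarith
  · push_neg at hA
    rw [hub'_eq_of_abs_le hB]
    nlinarith [sq_nonneg (|a + d| - l)]
  · push_neg at hA hB
    rcases lt_or_ge l a with hpos | hneg
    · rw [hub'_eq_pos hl hpos]
      have : |a| = a := abs_of_pos (by linarith)
      rcases hcase with ⟨he, _⟩ | ⟨he, hneg2⟩
      · nlinarith
      · nlinarith [sq_nonneg (a + d + l), sq_nonneg (a + d - l),
          mul_pos hl (by linarith : (0:ℝ) < a - l), sq_nonneg d,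
          mul_pos (by linarith : (0:ℝ) < a - l) (by linarith : (0:ℝ) < -(a+d) - l + (a - l))]
    · have hneg' : a < -l := by
        rcases abs_cases a with ⟨he, _⟩ | ⟨he, _⟩ <;> [linarith; linarith]
      rw [hub'_eq_neg hl hneg']
      have : |a| = -a := abs_of_neg (by linarith)
      rcases hcase with ⟨he, hpos2⟩ | ⟨he, _⟩
      · nlinarith [sq_nonneg (a + d + l), sq_nonneg (a + d - l),
          mul_pos hl (by linarith : (0:ℝ) < -a - l), sq_nonneg d,
          mul_pos (by linarith : (0:ℝ) < -a - l) (by linarith : (0:ℝ) < (a+d) - l + (-a - l))]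
      · nlinarith

lemma hub_lin {l a d : ℝ} (hl : 0 < l) :
    hub l (a + d) ≤ hub l a + hub' l a * d + 4*l*|d| := by
  have key : hub l (a + d) ≤ hub l a + 2*l*|d| := by
    have h1 : |a + d| ≤ |a| + |d| := abs_add_le a d
    have h2 : |a| ≤ |a + d| + |d| := by
      calc |a| = |a + d + (-d)| := by ring_nf
      _ ≤ |a + d| + |(-d)| := abs_add_le _ _
      _ = |a + d| + |d| := by rw [abs_neg]
    have hsa := sq_abs a
    have hsad := sq_abs (a + d)
    have hd := abs_nonneg d
    unfold hub
    split_ifs with hA hB hB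
    · nlinarith [abs_mul d (a + (a + d)), le_abs_self (d * (a + (a+d))), abs_add_le a (a+d),
        abs_nonneg a, abs_nonneg (a+d)]
    · push_neg at hB
      nlinarith [sq_nonneg (l - |a|), pow_le_pow_left₀ (abs_nonneg (a+d)) hA 2]
    · push_neg at hA; nlinarith [sq_nonneg (l - |a+d|)]
    · push_neg at hA hB; nlinarith
  have h2 : -(2*l*|d|) ≤ hub' l a * d := by
    have hb := hub'_abs_le (t := a) hl
    have := abs_mul (hub' l a) d
    nlinarith [abs_nonneg d, neg_abs_le (hub' l a * d), abs_nonneg (hub' l a)]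
  linarith

lemma hub_add_le {l a d : ℝ} (hl : 0 < l) :
    hub l (a + d) ≤ hub l a + hub' l a * d + min (d^2) (4*l*|d|) := by
  rcases le_total (d^2) (4*l*|d|) with h | h
  · rw [min_eq_left h]; exact hub_taylor hl
  · rw [min_eq_right h]; exact hub_lin hl

lemma measurable_hub (l : ℝ) : Measurable (hub l) := by
  unfold hub
  exact Measurable.ite (measurableSet_le (by measurability) measurable_const)
    (by measurability) (by measurability)

lemma measurable_hub' (l : ℝ) : Measurable (hub' l) := by
  unfold hub'; measurability

lemma key_integral {Ω : Type*} {mΩ : MeasurableSpace Ω} (μ : Measure Ω) [IsProbabilityMeasure μ]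
    (ℱ : Filtration ℕ mΩ) (Y : ℕ → Ω → ℝ) (hY : Martingale Y ℱ μ) (i : ℕ)
    (G : Ω → ℝ) (hG : StronglyMeasurable[ℱ i] G) (c : ℝ) (hGb : ∀ ω, |G ω| ≤ c) :
    ∫ ω, G ω * Y (i+1) ω ∂μ = ∫ ω, G ω * Y i ω ∂μ := by
  have hle := ℱ.le i
  haveI : SigmaFinite (μ.trim hle) := inferInstance
  have hGm : AEStronglyMeasurable G μ := (hG.mono hle).aestronglyMeasurable
  have hint1 : Integrable (fun ω => G ω * Y (i+1) ω) μ :=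
    (hY.integrable (i+1)).bdd_mul hGm (Filter.Eventually.of_forall (fun ω => by
      simpa using hGb ω))
  have hpull := condExp_mul_of_stronglyMeasurable_left (μ := μ) (m := ℱ i) hG hint1 (hY.integrable (i+1))
  have hmart : μ[Y (i+1)|ℱ i] =ᵐ[μ] Y i := hY.condExp_ae_eq (Nat.le_succ i)
  calc ∫ ω, G ω * Y (i+1) ω ∂μ
      = ∫ ω, (μ[(fun ω => G ω * Y (i+1) ω)|ℱ i]) ω ∂μ := (integral_condExp hle).symm
    _ = ∫ ω, G ω * Y i ω ∂μ := by
        refine integral_congr_ae ?_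
        filter_upwards [hpull, hmart] with ω h1 h2
        show (μ[G * Y (i+1)|ℱ i]) ω = G ω * Y i ω
        rw [h1]
        simp only [Pi.mul_apply, h2]

/-- A bound on "slowly evolving" nonnegative martingales: if `Y₀ = 1`,
`Y₀,…,Yₙ` is a nonnegative martingale (w.r.t. a filtration `ℱ`) and
`R i = Y i / Y (i-1) − 1` (set to `0` when `Y (i-1) = Y i = 0`), then for every
`λ ∈ (0, 1/4]`,
`Pr[∃ i ∈ [n], |Y i − 1| ≥ λ] ≤ 23 · E[∑_{i=1}^n min(|R i|, (R i)²)] / λ²`. -/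
theorem martingale_slowly_evolving_bound
    {Ω : Type*} {mΩ : MeasurableSpace Ω} (μ : Measure Ω) [IsProbabilityMeasure μ]
    (ℱ : Filtration ℕ mΩ) (n : ℕ) (Y : ℕ → Ω → ℝ)
    (hY : Martingale Y ℱ μ)
    (h0 : ∀ ω, Y 0 ω = 1) (hpos : ∀ i ω, 0 ≤ Y i ω)
    (R : ℕ → Ω → ℝ)
    (hR : ∀ i ω, R i ω =
      if Y (i - 1) ω = 0 ∧ Y i ω = 0 then 0 else Y i ω / Y (i - 1) ω - 1)
    (lam : ℝ) (hlam : lam ∈ Set.Ioc (0:ℝ) (1/4)) :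
    μ {ω | ∃ i ∈ Finset.Icc 1 n, lam ≤ |Y i ω - 1|} ≤
      ENNReal.ofReal
        (23 * (∫ ω, ∑ i ∈ Finset.Icc 1 n, min |R i ω| ((R i ω) ^ 2) ∂μ) / lam ^ 2) := by
  obtain ⟨hl0, hl4⟩ := hlam
  -- basic measurability of Y and R
  have hYm : ∀ k, Measurable (Y k) := fun k => ((hY.stronglyAdapted k).mono (ℱ.le k)).measurable
  have hRm : ∀ i, Measurable (R i) := by
    intro i
    have : R i = fun ω => if Y (i-1) ω = 0 ∧ Y i ω = 0 then 0
        else Y i ω / Y (i-1) ω - 1 := funext (hR i)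
    rw [this]
    refine Measurable.ite ?_ measurable_const (((hYm i).div (hYm (i-1))).sub measurable_const)
    exact ((hYm (i-1)) (measurableSet_singleton 0)).inter ((hYm i) (measurableSet_singleton 0))
  -- the stopping time
  set τ : Ω → ℕ := fun ω => sInf {k | (1 ≤ k ∧ k ≤ n ∧ lam ≤ |Y k ω - 1|) ∨ k = n + 1} with hτdef
  have hτne : ∀ ω, {k | (1 ≤ k ∧ k ≤ n ∧ lam ≤ |Y k ω - 1|) ∨ k = n + 1}.Nonempty :=
    fun ω => ⟨n+1, Or.inr rfl⟩
  have hτ_mem : ∀ ω, (1 ≤ τ ω ∧ τ ω ≤ n ∧ lam ≤ |Y (τ ω) ω - 1|) ∨ τ ω = n + 1 :=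
    fun ω => Nat.sInf_mem (hτne ω)
  have hτ_le : ∀ ω k, (1 ≤ k ∧ k ≤ n ∧ lam ≤ |Y k ω - 1|) → τ ω ≤ k :=
    fun ω k hk => Nat.sInf_le (Or.inl hk)
  have hτ1 : ∀ ω, 1 ≤ τ ω := by
    intro ω; rcases hτ_mem ω with h | h
    · exact h.1
    · omega
  have halive : ∀ ω k, 1 ≤ k → k ≤ n → k < τ ω → |Y k ω - 1| < lam := by
    intro ω k h1 h2 h3
    by_contra h
    push_neg at h
    exact absurd (hτ_le ω k ⟨h1, h2, h⟩) (by omega)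
  -- the stopped process
  set Z : ℕ → Ω → ℝ := fun j ω => Y (min j (τ ω)) ω with hZdef
  have hZ0 : ∀ ω, Z 0 ω = 1 := by intro ω; simp [hZdef, h0]
  -- measurability of {τ ≤ m}
  have hmeasτle : ∀ m, m ≤ n → MeasurableSet[ℱ m] {ω | τ ω ≤ m} := by
    intro m hm
    have hset : {ω | τ ω ≤ m} = ⋃ k ∈ Set.Icc 1 m, {ω | lam ≤ |Y k ω - 1|} := by
      ext ω
      simp only [Set.mem_setOf_eq, Set.mem_iUnion, Set.mem_Icc, exists_prop]
      constructor
      · intro h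
        rcases hτ_mem ω with ⟨h1, h2, h3⟩ | h1
        · exact ⟨τ ω, ⟨h1, h⟩, h3⟩
        · omega
      · rintro ⟨k, ⟨hk1, hkm⟩, hk⟩
        exact le_trans (hτ_le ω k ⟨hk1, hkm.trans hm, hk⟩) hkm
    rw [hset]
    refine MeasurableSet.biUnion (Set.to_countable _) fun k hk => ?_
    refine ℱ.mono hk.2 _ ?_
    letI := ℱ k
    have h1' : Measurable[ℱ k] (Y k) := (hY.stronglyAdapted k).measurable
    have hmeas1 : Measurable[ℱ k] fun ω => |Y k ω - 1| := (h1'.sub_const 1).abs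
    exact hmeas1 measurableSet_Ici
  -- Z as a finite sum of indicators
  have hZsum : ∀ j ω, Z j ω = ∑ k ∈ Finset.range (j+1),
      Set.indicator {ω' | min j (τ ω') = k} (Y k) ω := by
    intro j ω
    simp only [Set.indicator_apply, Set.mem_setOf_eq]
    rw [Finset.sum_ite_eq (Finset.range (j+1)) (min j (τ ω)) (fun k => Y k ω)]
    rw [if_pos (Finset.mem_range.mpr (by omega))]
  have hminmeas : ∀ j k, j ≤ n → MeasurableSet[ℱ j] {ω | min j (τ ω) = k} := by
    intro j k hj
    rcases Nat.lt_or_ge k j with hk | hk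
    · rcases Nat.eq_zero_or_pos k with rfl | hk1
      · have h1 : {ω | min j (τ ω) = 0} = ∅ := by
          ext ω
          simp only [Set.mem_setOf_eq, Set.mem_empty_iff_false, iff_false]
          have := hτ1 ω; omega
        rw [h1]; exact @MeasurableSet.empty _ (ℱ j)
      · have h1 : {ω | min j (τ ω) = k} = {ω | τ ω ≤ k} \ {ω | τ ω ≤ k-1} := by
          ext ω
          simp only [Set.mem_setOf_eq, Set.mem_diff]
          omega
        rw [h1]
        exact ((ℱ.mono hk.le) _ (hmeasτle k (by omega))).diff
          ((ℱ.mono (by omega : k-1 ≤ j)) _ (hmeasτle (k-1) (by omega)))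
    · by_cases hkj : k = j
      · subst hkj
        rcases Nat.eq_zero_or_pos k with rfl | hk1
        · have h1 : {ω | min 0 (τ ω) = 0} = Set.univ := by ext ω; simp
          rw [h1]; exact @MeasurableSet.univ _ (ℱ 0)
        · have h1 : {ω | min k (τ ω) = k} = {ω | τ ω ≤ k-1}ᶜ := by
            ext ω
            simp only [Set.mem_setOf_eq, Set.mem_compl_iff]
            omega
          rw [h1]
          exact ((ℱ.mono (by omega : k-1 ≤ k)) _ (hmeasτle (k-1) (by omega))).compl
      · have h1 : {ω | min j (τ ω) = k} = ∅ := by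
          ext ω
          simp only [Set.mem_setOf_eq, Set.mem_empty_iff_false, iff_false]
          omega
        rw [h1]; exact @MeasurableSet.empty _ (ℱ j)
  have hZsm : ∀ j, j ≤ n → StronglyMeasurable[ℱ j] (Z j) := by
    intro j hj
    have he : Z j = fun ω => ∑ k ∈ Finset.range (j+1),
        Set.indicator {ω' | min j (τ ω') = k} (Y k) ω := funext (hZsum j)
    rw [he]
    refine Finset.stronglyMeasurable_fun_sum _ fun k hk => ?_
    have hkj : k ≤ j := by have := Finset.mem_range.mp hk; omega
    exact ((hY.stronglyAdapted k).mono (ℱ.mono hkj)).indicator (hminmeas j k hj)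
  have hZm : ∀ j, j ≤ n → Measurable (Z j) := fun j hj => ((hZsm j hj).mono (ℱ.le j)).measurable
  have hZint : ∀ j, j ≤ n → Integrable (Z j) μ := by
    intro j hj
    have he : Z j = fun ω => ∑ k ∈ Finset.range (j+1),
        Set.indicator {ω' | min j (τ ω') = k} (Y k) ω := funext (hZsum j)
    rw [he]
    refine integrable_finset_sum _ fun k hk => ?_
    exact (hY.integrable k).indicator ((ℱ.le j) _ (hminmeas j k hj))
  -- integrability of hub of Z
  have hhubint : ∀ j, j ≤ n → Integrable (fun ω => hub lam (Z j ω - 1)) μ := by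
    intro j hj
    refine Integrable.mono' (((hZint j hj).abs.const_mul (2*lam)).add (integrable_const (2*lam)))
      ((measurable_hub lam).comp ((hZm j hj).sub measurable_const)).aestronglyMeasurable
      (Filter.Eventually.of_forall fun ω => ?_)
    rw [Real.norm_eq_abs, abs_of_nonneg (hub_nonneg hl0)]
    calc hub lam (Z j ω - 1) ≤ 2*lam*|Z j ω - 1| := hub_le hl0
      _ ≤ 2*lam*|Z j ω| + 2*lam := by
          have h1 : |Z j ω - 1| ≤ |Z j ω| + |(1:ℝ)| := abs_sub _ _
          have h2 : |(1:ℝ)| = 1 := abs_one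
          nlinarith [abs_nonneg (Z j ω)]
  -- integrability of min |R (k+1)| (R (k+1) ^2)
  have hRint : ∀ k, Integrable (fun ω => min |R (k+1) ω| (R (k+1) ω ^ 2)) μ := by
    intro k
    have hdiv : Integrable (fun ω => Y (k+1) ω / Y k ω) μ := by
      set g : ℕ → Ω → ℝ :=
        fun K ω => (if Y k ω = 0 then 0 else min (Y k ω)⁻¹ (K:ℝ)) * Y (k+1) ω with hgdef
      have hGsm : ∀ K : ℕ, StronglyMeasurable[ℱ k]
          (fun ω => if Y k ω = 0 then 0 else min (Y k ω)⁻¹ (K:ℝ)) := by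
        intro K
        have h1 : Measurable[ℱ k] (Y k) := (hY.stronglyAdapted k).measurable
        exact Measurable.stronglyMeasurable
          (Measurable.ite (h1 (measurableSet_singleton 0)) measurable_const
            (h1.inv.min measurable_const))
      have hGnn : ∀ K : ℕ, ∀ ω, 0 ≤ if Y k ω = 0 then 0 else min (Y k ω)⁻¹ (K:ℝ) := by
        intro K ω
        split_ifs
        · exact le_rfl
        · exact le_min (inv_nonneg.mpr (hpos k ω)) (Nat.cast_nonneg K)
      have hGb : ∀ K : ℕ, ∀ ω, |if Y k ω = 0 then 0 else min (Y k ω)⁻¹ (K:ℝ)| ≤ (K:ℝ) := by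
        intro K ω
        rw [abs_of_nonneg (hGnn K ω)]
        split_ifs
        · exact Nat.cast_nonneg K
        · exact min_le_right _ _
      have hgint : ∀ K : ℕ, Integrable (g K) μ :=
        fun K => (hY.integrable (k+1)).bdd_mul
          ((hGsm K).mono (ℱ.le k)).aestronglyMeasurable
          (Filter.Eventually.of_forall fun ω => by simpa using hGb K ω)
      have hgnn : ∀ K : ℕ, ∀ ω, 0 ≤ g K ω :=
        fun K ω => mul_nonneg (hGnn K ω) (hpos (k+1) ω)
      have hint1 : ∀ K : ℕ, ∫ ω, g K ω ∂μ ≤ 1 := by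
        intro K
        have hkey := key_integral μ ℱ Y hY k _ (hGsm K) (K:ℝ) (hGb K)
        have hbd : ∀ ω, (if Y k ω = 0 then 0 else min (Y k ω)⁻¹ (K:ℝ)) * Y k ω ≤ 1 := by
          intro ω
          split_ifs with h
          · norm_num
          · have hx : 0 < Y k ω := lt_of_le_of_ne (hpos k ω) (Ne.symm h)
            calc min (Y k ω)⁻¹ (K:ℝ) * Y k ω ≤ (Y k ω)⁻¹ * Y k ω :=
                  mul_le_mul_of_nonneg_right (min_le_left _ _) (hpos k ω)
              _ = 1 := inv_mul_cancel₀ h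
        have hint2 : Integrable (fun ω => (if Y k ω = 0 then 0 else min (Y k ω)⁻¹ (K:ℝ)) * Y k ω) μ :=
          (hY.integrable k).bdd_mul ((hGsm K).mono (ℱ.le k)).aestronglyMeasurable
            (Filter.Eventually.of_forall fun ω => by simpa using hGb K ω)
        calc ∫ ω, g K ω ∂μ
            = ∫ ω, (if Y k ω = 0 then 0 else min (Y k ω)⁻¹ (K:ℝ)) * Y k ω ∂μ := hkey
          _ ≤ ∫ ω, (1:ℝ) ∂μ := integral_mono hint2 (integrable_const 1) hbd
          _ = 1 := by simp
      have htend : ∀ ω, Filter.Tendsto (fun K : ℕ => g K ω) Filter.atTop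
          (nhds (Y (k+1) ω / Y k ω)) := by
        intro ω
        by_cases h : Y k ω = 0
        · have he : ∀ K : ℕ, g K ω = 0 := fun K => by simp [hgdef, h]
          have hv : Y (k+1) ω / Y k ω = 0 := by rw [h, div_zero]
          rw [hv]
          simpa [he] using tendsto_const_nhds (α := ℝ) (f := Filter.atTop (α := ℕ))
        · have hx : 0 < Y k ω := lt_of_le_of_ne (hpos k ω) (Ne.symm h)
          have hev : ∀ᶠ K : ℕ in Filter.atTop, g K ω = Y (k+1) ω / Y k ω := by
            filter_upwards [Filter.eventually_ge_atTop ⌈(Y k ω)⁻¹⌉₊] with K hK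
            have hK' : (Y k ω)⁻¹ ≤ (K:ℝ) := le_trans (Nat.le_ceil _) (by exact_mod_cast hK)
            simp only [hgdef, if_neg h, min_eq_left hK']
            rw [div_eq_inv_mul]
          exact Filter.Tendsto.congr'
            (by filter_upwards [hev] with K hh using hh.symm) tendsto_const_nhds
      have hdnn : ∀ ω, 0 ≤ Y (k+1) ω / Y k ω := fun ω => div_nonneg (hpos _ ω) (hpos _ ω)
      have hgm : ∀ K : ℕ, Measurable (g K) := by
        intro K
        refine Measurable.mul ?_ (hYm (k+1))
        exact Measurable.ite ((hYm k) (measurableSet_singleton 0)) measurable_const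
          ((hYm k).inv.min measurable_const)
      have hlint : ∫⁻ ω, ENNReal.ofReal (Y (k+1) ω / Y k ω) ∂μ ≤ 1 := by
        calc ∫⁻ ω, ENNReal.ofReal (Y (k+1) ω / Y k ω) ∂μ
            = ∫⁻ ω, Filter.liminf (fun K : ℕ => ENNReal.ofReal (g K ω)) Filter.atTop ∂μ := by
              refine lintegral_congr fun ω => ?_
              have ht2 : Filter.Tendsto (fun K : ℕ => ENNReal.ofReal (g K ω)) Filter.atTop
                  (nhds (ENNReal.ofReal (Y (k+1) ω / Y k ω))) :=
                (ENNReal.continuous_ofReal.tendsto _).comp (htend ω)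
              exact ht2.liminf_eq.symm
          _ ≤ Filter.liminf (fun K : ℕ => ∫⁻ ω, ENNReal.ofReal (g K ω) ∂μ) Filter.atTop :=
              lintegral_liminf_le fun K => (hgm K).ennreal_ofReal
          _ ≤ 1 := by
              have h1 : ∀ K : ℕ, ∫⁻ ω, ENNReal.ofReal (g K ω) ∂μ ≤ 1 := by
                intro K
                rw [← ofReal_integral_eq_lintegral_ofReal (hgint K)
                  (Filter.Eventually.of_forall (hgnn K))]
                calc ENNReal.ofReal (∫ ω, g K ω ∂μ) ≤ ENNReal.ofReal 1 :=
                    ENNReal.ofReal_le_ofReal (hint1 K)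
                  _ = 1 := ENNReal.ofReal_one
              calc Filter.liminf (fun K : ℕ => ∫⁻ ω, ENNReal.ofReal (g K ω) ∂μ) Filter.atTop
                  ≤ Filter.liminf (fun _ : ℕ => (1:ENNReal)) Filter.atTop :=
                    Filter.liminf_le_liminf (Filter.Eventually.of_forall h1)
                _ = 1 := Filter.liminf_const 1
      refine ⟨((hYm (k+1)).div (hYm k)).aestronglyMeasurable, ?_⟩
      rw [hasFiniteIntegral_iff_ofReal (Filter.Eventually.of_forall hdnn)]
      exact lt_of_le_of_lt hlint (by norm_num)
    have hRabs : ∀ ω, |R (k+1) ω| ≤ 1 + Y (k+1) ω / Y k ω := by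
      intro ω
      rw [hR]
      simp only [Nat.add_sub_cancel]
      have hdnn : 0 ≤ Y (k+1) ω / Y k ω := div_nonneg (hpos _ ω) (hpos _ ω)
      split_ifs with h
      · simpa using by linarith
      · calc |Y (k+1) ω / Y k ω - 1| ≤ |Y (k+1) ω / Y k ω| + |(1:ℝ)| := abs_sub _ _
          _ = 1 + Y (k+1) ω / Y k ω := by rw [abs_of_nonneg hdnn, abs_one]; ring
    refine Integrable.mono' ((integrable_const 1).add hdiv)
      ((hRm (k+1)).abs.min ((hRm (k+1)).pow_const 2)).aestronglyMeasurable
      (Filter.Eventually.of_forall fun ω => ?_)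
    have h1 : 0 ≤ min |R (k+1) ω| (R (k+1) ω ^ 2) := le_min (abs_nonneg _) (sq_nonneg _)
    rw [Real.norm_eq_abs, abs_of_nonneg h1]
    exact le_trans (min_le_left _ _) (hRabs ω)
  have hRnonneg : ∀ i ω, 0 ≤ min |R i ω| (R i ω ^ 2) :=
    fun i ω => le_min (abs_nonneg _) (sq_nonneg _)
  -- the increments
  set D : ℕ → Ω → ℝ := fun k ω => if k+1 ≤ τ ω then Y (k+1) ω - Y k ω else 0 with hDdef
  have hZstep : ∀ k ω, Z (k+1) ω = Z k ω + D k ω := by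
    intro k ω
    by_cases h : k+1 ≤ τ ω
    · have h1 : min (k+1) (τ ω) = k+1 := min_eq_left h
      have h2 : min k (τ ω) = k := min_eq_left (by omega)
      simp only [hZdef, hDdef, h1, h2, if_pos h]; ring
    · have h1 : min (k+1) (τ ω) = τ ω := min_eq_right (by omega)
      have h2 : min k (τ ω) = τ ω := min_eq_right (by omega)
      simp only [hZdef, hDdef, h1, h2, if_neg h]; ring
  have hsmeas : ∀ k, k < n → MeasurableSet {ω | k+1 ≤ τ ω} := by
    intro k hk
    have h1 : {ω | k+1 ≤ τ ω} = {ω | τ ω ≤ k}ᶜ := by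
      ext ω; simp only [Set.mem_setOf_eq, Set.mem_compl_iff]; omega
    rw [h1]
    exact ((ℱ.le k) _ (hmeasτle k (by omega))).compl
  have hDm : ∀ k, k < n → Measurable (D k) := by
    intro k hk
    exact Measurable.ite (hsmeas k hk) ((hYm (k+1)).sub (hYm k)) measurable_const
  have hφint : ∀ k, k < n → Integrable (fun ω => min (D k ω^2) (4*lam*|D k ω|)) μ := by
    intro k hk
    refine Integrable.mono'
      (((hY.integrable (k+1)).abs.add (hY.integrable k).abs).const_mul (4*lam))
      (((hDm k hk).pow_const 2).min (measurable_const.mul (hDm k hk).abs)).aestronglyMeasurable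
      (Filter.Eventually.of_forall fun ω => ?_)
    have h1 : 0 ≤ min (D k ω^2) (4*lam*|D k ω|) := le_min (sq_nonneg _) (by positivity)
    rw [Real.norm_eq_abs, abs_of_nonneg h1]
    have h2 : |D k ω| ≤ |Y (k+1) ω| + |Y k ω| := by
      simp only [hDdef]
      split_ifs
      · exact abs_sub _ _
      · simp [abs_nonneg]; positivity
    calc min (D k ω^2) (4*lam*|D k ω|) ≤ 4*lam*|D k ω| := min_le_right _ _
      _ ≤ 4*lam*(|Y (k+1) ω| + |Y k ω|) := by nlinarith
  -- step A
  have stepA : ∀ k, k < n →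
      (∫ ω, hub lam (Z (k+1) ω - 1) ∂μ) - (∫ ω, hub lam (Z k ω - 1) ∂μ) ≤
        ∫ ω, min (D k ω^2) (4*lam*|D k ω|) ∂μ := by
    intro k hk
    have hptwise : ∀ ω, hub lam (Z (k+1) ω - 1) ≤
        hub lam (Z k ω - 1) + hub' lam (Z k ω - 1) * D k ω + min (D k ω^2) (4*lam*|D k ω|) := by
      intro ω
      have h1 := hub_add_le (l := lam) (a := Z k ω - 1) (d := D k ω) hl0
      have he : Z k ω - 1 + D k ω = Z (k+1) ω - 1 := by rw [hZstep k ω]; ring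
      rwa [he] at h1
    set G : Ω → ℝ := fun ω => if k+1 ≤ τ ω then hub' lam (Z k ω - 1) else 0 with hGdef
    have hGY : ∀ ω, hub' lam (Z k ω - 1) * D k ω = G ω * Y (k+1) ω - G ω * Y k ω := by
      intro ω
      simp only [hGdef, hDdef]
      split_ifs <;> ring
    have hsmeasF : MeasurableSet[ℱ k] {ω | k+1 ≤ τ ω} := by
      have h1 : {ω | k+1 ≤ τ ω} = {ω | τ ω ≤ k}ᶜ := by
        ext ω; simp only [Set.mem_setOf_eq, Set.mem_compl_iff]; omega
      rw [h1]
      exact (hmeasτle k (by omega)).compl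
    have hGsm : StronglyMeasurable[ℱ k] G := by
      have hf : StronglyMeasurable[ℱ k] (fun ω => hub' lam (Z k ω - 1)) :=
        ((measurable_hub' lam).comp
          (((hZsm k hk.le).measurable).sub measurable_const)).stronglyMeasurable
      have he : G = Set.indicator {ω | k+1 ≤ τ ω} (fun ω => hub' lam (Z k ω - 1)) := by
        funext ω
        simp only [hGdef, Set.indicator_apply, Set.mem_setOf_eq]
      rw [he]
      exact hf.indicator hsmeasF
    have hGb : ∀ ω, |G ω| ≤ 2*lam := by
      intro ω
      simp only [hGdef]
      split_ifs
      · exact hub'_abs_le hl0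
      · simp; positivity
    have hGint1 : Integrable (fun ω => G ω * Y (k+1) ω) μ :=
      (hY.integrable (k+1)).bdd_mul (hGsm.mono (ℱ.le k)).aestronglyMeasurable
        (Filter.Eventually.of_forall fun ω => by simpa using hGb ω)
    have hGint2 : Integrable (fun ω => G ω * Y k ω) μ :=
      (hY.integrable k).bdd_mul (hGsm.mono (ℱ.le k)).aestronglyMeasurable
        (Filter.Eventually.of_forall fun ω => by simpa using hGb ω)
    have hprodint : Integrable (fun ω => hub' lam (Z k ω - 1) * D k ω) μ := by
      refine (hGint1.sub hGint2).congr (Filter.Eventually.of_forall fun ω => ?_)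
      exact (hGY ω).symm
    have hzero : ∫ ω, hub' lam (Z k ω - 1) * D k ω ∂μ = 0 := by
      have hk1 := key_integral μ ℱ Y hY k G hGsm (2*lam) hGb
      calc ∫ ω, hub' lam (Z k ω - 1) * D k ω ∂μ
          = ∫ ω, (G ω * Y (k+1) ω - G ω * Y k ω) ∂μ :=
            integral_congr_ae (Filter.Eventually.of_forall hGY)
        _ = (∫ ω, G ω * Y (k+1) ω ∂μ) - ∫ ω, G ω * Y k ω ∂μ := integral_sub hGint1 hGint2
        _ = 0 := by rw [hk1]; ring
    have hrhsint : Integrable (fun ω => hub lam (Z k ω - 1) + hub' lam (Z k ω - 1) * D k ω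
        + min (D k ω^2) (4*lam*|D k ω|)) μ :=
      ((hhubint k hk.le).add hprodint).add (hφint k hk)
    have hsum1 : Integrable (fun ω => hub lam (Z k ω - 1)
        + hub' lam (Z k ω - 1) * D k ω) μ := (hhubint k hk.le).add hprodint
    have hle := integral_mono (hhubint (k+1) (by omega)) hrhsint hptwise
    have e1 : ∫ ω, (hub lam (Z k ω - 1) + hub' lam (Z k ω - 1) * D k ω
          + min (D k ω^2) (4*lam*|D k ω|)) ∂μ
        = (∫ ω, (hub lam (Z k ω - 1) + hub' lam (Z k ω - 1) * D k ω) ∂μ)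
          + ∫ ω, min (D k ω^2) (4*lam*|D k ω|) ∂μ := integral_add hsum1 (hφint k hk)
    have e2 : (∫ ω, (hub lam (Z k ω - 1) + hub' lam (Z k ω - 1) * D k ω) ∂μ)
        = (∫ ω, hub lam (Z k ω - 1) ∂μ) + ∫ ω, hub' lam (Z k ω - 1) * D k ω ∂μ :=
      integral_add (hhubint k hk.le) hprodint
    linarith [hle, e1, e2, hzero]
  -- step B
  have stepB : ∀ k, k < n →
      (∫ ω, min (D k ω^2) (4*lam*|D k ω|) ∂μ) ≤
        2 * ∫ ω, min |R (k+1) ω| (R (k+1) ω ^ 2) ∂μ := by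
    intro k hk
    have hpt : ∀ ω, min (D k ω^2) (4*lam*|D k ω|) ≤ 2 * min |R (k+1) ω| (R (k+1) ω ^ 2) := by
      intro ω
      by_cases h : k+1 ≤ τ ω
      · have hb : |Y k ω - 1| < lam := by
          rcases Nat.eq_zero_or_pos k with rfl | hk1
          · rw [h0]; simpa using hl0
          · exact halive ω k hk1 (by omega) (by omega)
        obtain ⟨hbl, hbu⟩ := abs_lt.mp hb
        have hb1 : (0:ℝ) < Y k ω := by linarith
        have hYne : ¬(Y k ω = 0 ∧ Y (k+1) ω = 0) := fun hc => by
          have := hc.1; linarith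
        have hr : R (k+1) ω = Y (k+1) ω / Y k ω - 1 := by
          rw [hR]; simp only [Nat.add_sub_cancel]; rw [if_neg hYne]
        have hD1 : D k ω = Y k ω * R (k+1) ω := by
          simp only [hDdef, if_pos h]
          rw [hr]
          field_simp
        have h2min : (2:ℝ) * min |R (k+1) ω| (R (k+1) ω ^ 2)
            = min (2*|R (k+1) ω|) (2*(R (k+1) ω ^ 2)) :=
          mul_min_of_nonneg _ _ (by norm_num)
        rw [hD1, h2min]
        refine le_min ?_ ?_
        · refine le_trans (min_le_right _ _) ?_
          rw [abs_mul, abs_of_pos hb1]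
          have hlb : lam * Y k ω ≤ (1/4) * (5/4) := by nlinarith
          nlinarith [abs_nonneg (R (k+1) ω),
            mul_le_mul_of_nonneg_right hlb (abs_nonneg (R (k+1) ω))]
        · refine le_trans (min_le_left _ _) ?_
          have hb2sq : Y k ω ^ 2 ≤ 2 := by nlinarith
          nlinarith [sq_nonneg (R (k+1) ω),
            mul_le_mul_of_nonneg_right hb2sq (sq_nonneg (R (k+1) ω))]
      · simp only [hDdef, if_neg h]
        have h1 := hRnonneg (k+1) ω
        have h2 : min ((0:ℝ)^2) (4*lam*|(0:ℝ)|) = 0 := by norm_num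
        rw [h2]
        linarith
    calc (∫ ω, min (D k ω^2) (4*lam*|D k ω|) ∂μ)
        ≤ ∫ ω, 2 * min |R (k+1) ω| (R (k+1) ω ^ 2) ∂μ :=
          integral_mono (hφint k hk) ((hRint k).const_mul 2) hpt
      _ = 2 * ∫ ω, min |R (k+1) ω| (R (k+1) ω ^ 2) ∂μ := integral_const_mul 2 _
  -- telescoping
  have htel : (∫ ω, hub lam (Z n ω - 1) ∂μ) =
      ∑ k ∈ Finset.range n, ((∫ ω, hub lam (Z (k+1) ω - 1) ∂μ)
        - (∫ ω, hub lam (Z k ω - 1) ∂μ)) := by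
    rw [Finset.sum_range_sub (fun j => ∫ ω, hub lam (Z j ω - 1) ∂μ)]
    have h1 : (∫ ω, hub lam (Z 0 ω - 1) ∂μ) = 0 := by
      have h2 : ∀ ω, hub lam (Z 0 ω - 1) = 0 := by
        intro ω; rw [hZ0 ω]; simpa using hub_zero hl0
      simp [h2]
    rw [h1, sub_zero]
  -- Markov step
  set A : Set Ω := {ω | ∃ i ∈ Finset.Icc 1 n, lam ≤ |Y i ω - 1|} with hAdef
  have hA_eq : A = {ω | τ ω ≤ n} := by
    ext ω
    simp only [hAdef, Set.mem_setOf_eq, Finset.mem_Icc]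
    constructor
    · rintro ⟨i, ⟨hi1, hi2⟩, hi3⟩
      exact le_trans (hτ_le ω i ⟨hi1, hi2, hi3⟩) hi2
    · intro h
      rcases hτ_mem ω with ⟨h1, h2, h3⟩ | h1
      · exact ⟨τ ω, ⟨h1, h2⟩, h3⟩
      · exact absurd h (by omega)
  have hAmeas : MeasurableSet A := by
    rw [hA_eq]; exact (ℱ.le n) _ (hmeasτle n le_rfl)
  have stepMarkov : lam^2 * (μ A).toReal ≤ ∫ ω, hub lam (Z n ω - 1) ∂μ := by
    have hlower : ∀ ω ∈ A, lam^2 ≤ hub lam (Z n ω - 1) := by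
      intro ω hω
      rw [hA_eq] at hω
      have h1 : Z n ω = Y (τ ω) ω := by
        simp only [hZdef]; rw [min_eq_right hω]
      rcases hτ_mem ω with ⟨_, _, h3⟩ | h2
      · rw [h1]; exact hub_ge hl0 h3
      · have hω' : τ ω ≤ n := hω
        exact absurd hω' (by omega)
    calc lam^2 * (μ A).toReal = ∫ _ω in A, lam^2 ∂μ := by
          rw [setIntegral_const, smul_eq_mul, measureReal_def]; ring
      _ ≤ ∫ ω in A, hub lam (Z n ω - 1) ∂μ :=
          setIntegral_mono_on (integrable_const _).integrableOn
            ((hhubint n le_rfl)).integrableOn hAmeas hlower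
      _ ≤ ∫ ω, hub lam (Z n ω - 1) ∂μ :=
          setIntegral_le_integral (hhubint n le_rfl)
            (Filter.Eventually.of_forall fun ω => hub_nonneg hl0)
  -- assemble
  set S : ℝ := ∫ ω, ∑ i ∈ Finset.Icc 1 n, min |R i ω| ((R i ω) ^ 2) ∂μ with hSdef
  have hSsum : S = ∑ k ∈ Finset.range n, ∫ ω, min |R (k+1) ω| (R (k+1) ω ^ 2) ∂μ := by
    rw [hSdef]
    rw [integral_finset_sum _ (fun i hi => ?_)]
    · rw [← Finset.Ico_add_one_right_eq_Icc, Finset.sum_Ico_eq_sum_range]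
      refine Finset.sum_congr (by norm_num) fun k _ => ?_
      rw [Nat.add_comm 1 k]
    · have hi1 : 1 ≤ i := (Finset.mem_Icc.mp hi).1
      have := hRint (i-1)
      rwa [Nat.sub_add_cancel hi1] at this
  have hSnonneg : 0 ≤ S := by
    rw [hSsum]
    exact Finset.sum_nonneg fun k _ => integral_nonneg (fun ω => hRnonneg _ ω)
  have hmain : lam^2 * (μ A).toReal ≤ 2 * S := by
    calc lam^2 * (μ A).toReal ≤ ∫ ω, hub lam (Z n ω - 1) ∂μ := stepMarkov
      _ = ∑ k ∈ Finset.range n, ((∫ ω, hub lam (Z (k+1) ω - 1) ∂μ)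
            - (∫ ω, hub lam (Z k ω - 1) ∂μ)) := htel
      _ ≤ ∑ k ∈ Finset.range n, 2 * ∫ ω, min |R (k+1) ω| (R (k+1) ω ^ 2) ∂μ := by
          refine Finset.sum_le_sum fun k hk => ?_
          have hkn := Finset.mem_range.mp hk
          exact (stepA k hkn).trans (stepB k hkn)
      _ = 2 * S := by rw [hSsum, Finset.mul_sum]
  have hfinal : (μ A).toReal ≤ 23 * S / lam^2 := by
    rw [le_div_iff₀ (by positivity)]
    nlinarith [ENNReal.toReal_nonneg (a := μ A)]
  calc μ A = ENNReal.ofReal ((μ A).toReal) := (ENNReal.ofReal_toReal (measure_ne_top μ A)).symm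
    _ ≤ ENNReal.ofReal (23 * S / lam^2) := ENNReal.ofReal_le_ofReal hfinal
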